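/- Let d ≥ 2 be an integer and k_1, k_2, k_3 integers with 1 ≤ k_j ≤ d−1. Set x_j = exp(2πi k_j/d) and let h be the 2×2 complex matrix with entries h(1,1) = (1−x_1x_2)/((1−x_1)(1−x_2)), h(1,2) = −x_2/(1−x_2), h(2,1) = −1/(1−x_2), h(2,2) = (1−x_2x_3)/((1−x_2)(1−x_3)). Then det h = (1−x_1x_2x_3)/((1−x_1)(1−x_2)(1−x_3)) = −(1/4) · sin(π(k_1+k_2+k_3)/d) / (sin(πk_1/d) · sin(πk_2/d) · sin(πk_3/d)). -/

import Mathlib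

open Matrix

lemma one_sub_exp_two (θ : ℝ) :
    1 - Complex.exp (2 * θ * Complex.I) =
      -2 * Complex.I * (Real.sin θ : ℂ) * Complex.exp ((θ : ℂ) * Complex.I) := by
  have h : Complex.exp (-(θ:ℂ) * Complex.I) * Complex.exp ((θ:ℂ) * Complex.I) = 1 := by
    rw [← Complex.exp_add]; ring_nf; exact Complex.exp_zero
  have h2 : Complex.exp ((θ:ℂ) * Complex.I) * Complex.exp ((θ:ℂ) * Complex.I)
      = Complex.exp (2*θ*Complex.I) := by rw [← Complex.exp_add]; ring_nf
  rw [Complex.ofReal_sin, Complex.sin]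
  linear_combination - h + h2 + (Complex.exp (-(θ:ℂ) * Complex.I) - Complex.exp ((θ:ℂ) * Complex.I)) * Complex.exp ((θ:ℂ) * Complex.I) * Complex.I_mul_I

/-- The skew-Hermitian matrix `h` built from `x_j = exp(2πi k_j / d)`. -/
noncomputable def hMat (d : ℕ) (k : Fin 3 → ℤ) : Matrix (Fin 2) (Fin 2) ℂ :=
  let x : Fin 3 → ℂ := fun j => Complex.exp (2 * Real.pi * Complex.I * ((k j : ℂ)) / d)
  !![(1 - x 0 * x 1) / ((1 - x 0) * (1 - x 1)), -(x 1) / (1 - x 1);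
     -1 / (1 - x 1), (1 - x 1 * x 2) / ((1 - x 1) * (1 - x 2))]

theorem det_hMat (d : ℕ) (hd : 2 ≤ d) (k : Fin 3 → ℤ)
    (hk : ∀ j, 1 ≤ k j ∧ k j ≤ (d : ℤ) - 1) :
    (hMat d k).det =
      (1 - Complex.exp (2 * Real.pi * Complex.I * ((k 0 : ℂ)) / d) *
        Complex.exp (2 * Real.pi * Complex.I * ((k 1 : ℂ)) / d) *
        Complex.exp (2 * Real.pi * Complex.I * ((k 2 : ℂ)) / d)) /
      ((1 - Complex.exp (2 * Real.pi * Complex.I * ((k 0 : ℂ)) / d)) *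
       (1 - Complex.exp (2 * Real.pi * Complex.I * ((k 1 : ℂ)) / d)) *
       (1 - Complex.exp (2 * Real.pi * Complex.I * ((k 2 : ℂ)) / d))) ∧
    (hMat d k).det =
      ((-(1 / 4) * Real.sin (Real.pi * ((k 0 : ℝ) + (k 1 : ℝ) + (k 2 : ℝ)) / d) /
        (Real.sin (Real.pi * (k 0 : ℝ) / d) * Real.sin (Real.pi * (k 1 : ℝ) / d) *
         Real.sin (Real.pi * (k 2 : ℝ) / d)) : ℝ) : ℂ) := by
  have hd0 : (0:ℝ) < d := by positivity
  set θ : Fin 3 → ℝ := fun j => Real.pi * (k j) / d with hθdef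
  have harg : ∀ j : Fin 3, 2 * Real.pi * Complex.I * ((k j : ℂ)) / d
      = 2 * (θ j : ℂ) * Complex.I := by
    intro j
    have : (d:ℂ) ≠ 0 := by exact_mod_cast hd0.ne'
    simp only [hθdef]
    push_cast
    field_simp
  have hsin : ∀ j, Real.sin (θ j) ≠ 0 := by
    intro j
    have h1 : (1:ℝ) ≤ (k j : ℝ) := by exact_mod_cast (hk j).1
    have h2 : (k j : ℝ) ≤ (d:ℝ) - 1 := by exact_mod_cast (hk j).2
    have hpos : 0 < θ j := by
      simp only [hθdef]
      have := Real.pi_pos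
      positivity
    have hlt : θ j < Real.pi := by
      simp only [hθdef]
      rw [div_lt_iff₀ hd0]
      have := Real.pi_pos
      nlinarith
    exact (Real.sin_pos_of_pos_of_lt_pi hpos hlt).ne'
  have hx : ∀ j : Fin 3, 1 - Complex.exp (2 * Real.pi * Complex.I * ((k j : ℂ)) / d)
      = -2 * Complex.I * (Real.sin (θ j) : ℂ) * Complex.exp ((θ j : ℂ) * Complex.I) := by
    intro j; rw [harg j]; exact one_sub_exp_two _
  have hne : ∀ j : Fin 3,
      (1 - Complex.exp (2 * Real.pi * Complex.I * ((k j : ℂ)) / d)) ≠ 0 := by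
    intro j
    rw [hx j]
    exact mul_ne_zero (mul_ne_zero (mul_ne_zero (by norm_num) Complex.I_ne_zero)
      (Complex.ofReal_ne_zero.mpr (hsin j))) (Complex.exp_ne_zero _)
  have part1 : (hMat d k).det =
      (1 - Complex.exp (2 * Real.pi * Complex.I * ((k 0 : ℂ)) / d) *
        Complex.exp (2 * Real.pi * Complex.I * ((k 1 : ℂ)) / d) *
        Complex.exp (2 * Real.pi * Complex.I * ((k 2 : ℂ)) / d)) /
      ((1 - Complex.exp (2 * Real.pi * Complex.I * ((k 0 : ℂ)) / d)) *
       (1 - Complex.exp (2 * Real.pi * Complex.I * ((k 1 : ℂ)) / d)) *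
       (1 - Complex.exp (2 * Real.pi * Complex.I * ((k 2 : ℂ)) / d))) := by
    simp only [hMat, Matrix.det_fin_two_of]
    field_simp [hne 0, hne 1, hne 2]
    ring
  refine ⟨part1, ?_⟩
  rw [part1]
  -- product of exponentials
  have hprodx : Complex.exp (2 * Real.pi * Complex.I * ((k 0 : ℂ)) / d) *
        Complex.exp (2 * Real.pi * Complex.I * ((k 1 : ℂ)) / d) *
        Complex.exp (2 * Real.pi * Complex.I * ((k 2 : ℂ)) / d)
      = Complex.exp (2 * ((θ 0 + θ 1 + θ 2 : ℝ) : ℂ) * Complex.I) := by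
    rw [harg 0, harg 1, harg 2, ← Complex.exp_add, ← Complex.exp_add]
    push_cast
    ring_nf
  have hsum : 1 - Complex.exp (2 * Real.pi * Complex.I * ((k 0 : ℂ)) / d) *
        Complex.exp (2 * Real.pi * Complex.I * ((k 1 : ℂ)) / d) *
        Complex.exp (2 * Real.pi * Complex.I * ((k 2 : ℂ)) / d)
      = -2 * Complex.I * (Real.sin (θ 0 + θ 1 + θ 2) : ℂ) *
          Complex.exp (((θ 0 + θ 1 + θ 2 : ℝ) : ℂ) * Complex.I) := by
    rw [hprodx]; exact one_sub_exp_two _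
  have hsinsum : Real.sin (Real.pi * ((k 0 : ℝ) + (k 1 : ℝ) + (k 2 : ℝ)) / d)
      = Real.sin (θ 0 + θ 1 + θ 2) := by
    congr 1
    simp only [hθdef]
    field_simp
  have hesum : Complex.exp (((θ 0 + θ 1 + θ 2 : ℝ) : ℂ) * Complex.I)
      = Complex.exp ((θ 0 : ℂ) * Complex.I) * Complex.exp ((θ 1 : ℂ) * Complex.I) *
        Complex.exp ((θ 2 : ℂ) * Complex.I) := by
    rw [← Complex.exp_add, ← Complex.exp_add]
    push_cast
    ring_nf
  rw [hsum, hx 0, hx 1, hx 2, hsinsum, hesum]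
  have hI := Complex.I_mul_I
  have e0 := Complex.exp_ne_zero ((θ 0 : ℂ) * Complex.I)
  have e1 := Complex.exp_ne_zero ((θ 1 : ℂ) * Complex.I)
  have e2 := Complex.exp_ne_zero ((θ 2 : ℂ) * Complex.I)
  have s0 : ((Real.sin (θ 0) : ℂ)) ≠ 0 := by exact_mod_cast Complex.ofReal_ne_zero.mpr (hsin 0)
  have s1 : ((Real.sin (θ 1) : ℂ)) ≠ 0 := by exact_mod_cast Complex.ofReal_ne_zero.mpr (hsin 1)
  have s2 : ((Real.sin (θ 2) : ℂ)) ≠ 0 := by exact_mod_cast Complex.ofReal_ne_zero.mpr (hsin 2)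
  have ht0 : Real.pi * ((k 0 : ℝ)) / d = θ 0 := rfl
  have ht1 : Real.pi * ((k 1 : ℝ)) / d = θ 1 := rfl
  have ht2 : Real.pi * ((k 2 : ℝ)) / d = θ 2 := rfl
  rw [ht0, ht1, ht2]
  simp only [Complex.ofReal_div, Complex.ofReal_mul, Complex.ofReal_neg, Complex.ofReal_one,
    Complex.ofReal_ofNat]
  have hfac : ∀ (s : ℝ) (e : ℂ), s ≠ 0 → e ≠ 0 →
      (-2 * Complex.I * (s : ℂ) * e) ≠ 0 := fun s e hs he =>
    mul_ne_zero (mul_ne_zero (mul_ne_zero (by norm_num) Complex.I_ne_zero)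
      (Complex.ofReal_ne_zero.mpr hs)) he
  rw [div_eq_div_iff
    (mul_ne_zero (mul_ne_zero (hfac _ _ (hsin 0) (Complex.exp_ne_zero _))
      (hfac _ _ (hsin 1) (Complex.exp_ne_zero _))) (hfac _ _ (hsin 2) (Complex.exp_ne_zero _)))
    (mul_ne_zero (mul_ne_zero s0 s1) s2)]
  linear_combination (-2 * Complex.I * (Real.sin (θ 0 + θ 1 + θ 2) : ℂ) *
    (Real.sin (θ 0) : ℂ) * (Real.sin (θ 1) : ℂ) * (Real.sin (θ 2) : ℂ) *
    Complex.exp ((θ 0 : ℂ) * Complex.I) * Complex.exp ((θ 1 : ℂ) * Complex.I) *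
    Complex.exp ((θ 2 : ℂ) * Complex.I)) * hI
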